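/- Let F: R → R be L-smooth (its gradient is L-Lipschitz). Suppose curvature iterates satisfy c^{(t+1)} = c^{(t)} − η ĝ^{(t)} where ‖ĝ^{(t)} − ∇F(c^{(t)})‖² ≤ E for all t and η is a fixed step size with 1/(8L) ≤ η ≤ 1/(4L). Then (1/T) Σ_{t=1}^{T} ‖∇F(c^{(t)})‖² ≤ (64/3)·L·(F(c^{(1)}) − F(c^{(T+1)}))/T + 3E. -/

import Mathlib

open Finset

lemma descent_lemma (F : ℝ → ℝ) (L : ℝ) (hL0 : 0 ≤ L)
    (hdiff : Differentiable ℝ F)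
    (hlip : ∀ x y : ℝ, |deriv F x - deriv F y| ≤ L * |x - y|)
    (x y : ℝ) : F y ≤ F x + deriv F x * (y - x) + L * (y - x) ^ 2 := by
  set G : ℝ → ℝ := fun z => F z - deriv F x * z with hG
  have hGdiff : ∀ z : ℝ, DifferentiableAt ℝ G z := fun z =>
    (hdiff z).sub ((differentiable_id.const_mul _) z)
  have hGderiv : ∀ z : ℝ, deriv G z = deriv F z - deriv F x := by
    intro z
    have h1 : HasDerivAt G (deriv F z - deriv F x) z := by
      exact ((hdiff z).hasDerivAt.sub ((hasDerivAt_id z).const_mul (deriv F x))).congr_deriv (by simp)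
    exact h1.deriv
  have key : |G y - G x| ≤ (L * |y - x|) * |y - x| := by
    apply Convex.norm_image_sub_le_of_norm_deriv_le (s := Set.uIcc x y)
      (fun z _ => hGdiff z) ?_ (convex_uIcc x y) (Set.left_mem_uIcc) (Set.right_mem_uIcc)
    intro z hz
    rw [Real.norm_eq_abs, hGderiv z]
    calc |deriv F z - deriv F x| ≤ L * |z - x| := hlip z x
      _ ≤ L * |y - x| := by
          have h1 : |z - x| ≤ |y - x| := Set.abs_sub_left_of_mem_uIcc hz
          nlinarith [abs_nonneg (z - x)]
  have h2 : G y - G x ≤ L * (y - x) ^ 2 := by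
    have h := (abs_le.mp key).2
    calc G y - G x ≤ (L * |y - x|) * |y - x| := h
      _ = L * (y - x) ^ 2 := by rw [mul_assoc, ← abs_mul, ← sq, abs_sq]
  have h3 : G y - G x = F y - F x - deriv F x * (y - x) := by rw [hG]; ring
  linarith [h3 ▸ h2]

set_option maxHeartbeats 1000000 in
theorem curvature_convergence (F : ℝ → ℝ) (L : ℝ) (hL : 0 < L)
    (hdiff : Differentiable ℝ F)
    (hlip : ∀ x y : ℝ, |deriv F x - deriv F y| ≤ L * |x - y|)
    (c g : ℕ → ℝ) (η : ℝ)
    (hupd : ∀ t : ℕ, c (t + 1) = c t - η * g t)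
    (E : ℝ) (herr : ∀ t : ℕ, (g t - deriv F (c t)) ^ 2 ≤ E)
    (hη₁ : 1 / (8 * L) ≤ η) (hη₂ : η ≤ 1 / (4 * L))
    (T : ℕ) (hT : 0 < T) :
    (1 / (T : ℝ)) * ∑ t ∈ Finset.Icc 1 T, (deriv F (c t)) ^ 2 ≤
      (64 / 3) * L * (F (c 1) - F (c (T + 1))) / T + 3 * E := by
  have hη0 : 0 < η := lt_of_lt_of_le (by positivity) hη₁
  have hE0 : 0 ≤ E := le_trans (sq_nonneg _) (herr 0)
  have hLη : L * η ≤ 1 / 4 := by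
    have h := mul_le_mul_of_nonneg_left hη₂ hL.le
    have he : L * (1 / (4 * L)) = 1 / 4 := by field_simp
    rw [he] at h; exact h
  have hLη' : 1 / 8 ≤ L * η := by
    have h := mul_le_mul_of_nonneg_left hη₁ hL.le
    have he : L * (1 / (8 * L)) = 1 / 8 := by field_simp
    rw [he] at h; exact h
  -- per-step bound
  have step : ∀ t : ℕ, F (c (t + 1)) ≤ F (c t) - (η / 2) * (deriv F (c t)) ^ 2 + (η / 2) * E := by
    intro t
    have hd := descent_lemma F L hL.le hdiff hlip (c t) (c (t + 1))
    rw [hupd t] at hd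
    have hdd : c t - η * g t - c t = -(η * g t) := by ring
    rw [hdd] at hd
    set D := deriv F (c t) with hD
    set e := g t - D with he
    have hge : g t = D + e := by rw [he]; ring
    have heE : e ^ 2 ≤ E := herr t
    have h1 : F (c t - η * g t) ≤ F (c t) - η * D * (D + e) + L * η ^ 2 * (D + e) ^ 2 := by
      calc F (c t - η * g t) ≤ F (c t) + D * (-(η * g t)) + L * (-(η * g t)) ^ 2 := hd
        _ = F (c t) - η * D * (D + e) + L * η ^ 2 * (D + e) ^ 2 := by rw [hge]; ring
    rw [hupd t]
    have h2 : L * η ^ 2 * (D + e) ^ 2 ≤ (η / 4) * (D + e) ^ 2 := by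
      nlinarith [sq_nonneg (D + e), hη0]
    have h3 : - η * D * (D + e) + (η / 4) * (D + e) ^ 2 ≤ -(η / 2) * D ^ 2 + (η / 2) * e ^ 2 := by
      nlinarith [sq_nonneg (D - e), hη0, sq_nonneg (D + e)]
    have h4 : (η / 2) * e ^ 2 ≤ (η / 2) * E :=
      mul_le_mul_of_nonneg_left heE (by positivity)
    linarith
  -- telescoping sum
  have sumbd : ∀ n : ℕ, ∑ t ∈ Finset.Icc 1 n, (deriv F (c t)) ^ 2 ≤
      (2 / η) * (F (c 1) - F (c (n + 1))) + n * E := by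
    intro n
    induction n with
    | zero => simp
    | succ n ih =>
      rw [Finset.sum_Icc_succ_top (by omega : 1 ≤ n + 1)]
      have hs := step (n + 1)
      have hkey : (deriv F (c (n+1)))^2 - E ≤ (2 / η) * (F (c (n+1)) - F (c (n+2))) := by
        have h2 : (η/2) * (deriv F (c (n+1)))^2 - (η/2) * E ≤ F (c (n+1)) - F (c (n+2)) := by
          linarith
        have h3 := mul_le_mul_of_nonneg_left h2 (le_of_lt (by positivity : (0:ℝ) < 2 / η))
        rw [mul_sub] at h3
        have hne : (2 / η) * ((η/2) * (deriv F (c (n+1)))^2) = (deriv F (c (n+1)))^2 := by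
          field_simp
        have hne2 : (2 / η) * ((η/2) * E) = E := by field_simp
        rw [hne, hne2] at h3
        linarith
      have hsplit : (2 / η) * (F (c 1) - F (c (n + 1 + 1))) =
          (2 / η) * (F (c 1) - F (c (n + 1))) + (2 / η) * (F (c (n+1)) - F (c (n+2))) := by
        ring_nf
      push_cast
      linarith
  -- lower bound on the decrease
  have hΔlow : ∀ n : ℕ, -(n : ℝ) * (η / 2) * E ≤ F (c 1) - F (c (n + 1)) := by
    intro n
    induction n with
    | zero => simp
    | succ n ih =>
      have hs := step (n + 1)
      have hpos : 0 ≤ (η / 2) * (deriv F (c (n+1)))^2 :=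
        mul_nonneg (by positivity) (sq_nonneg _)
      push_cast
      linarith
  have hT0 : (0:ℝ) < T := by exact_mod_cast hT
  have hΔ := hΔlow T
  have hsum := sumbd T
  have sum0 : 0 ≤ ∑ t ∈ Finset.Icc 1 T, (deriv F (c t)) ^ 2 :=
    Finset.sum_nonneg fun t _ => sq_nonneg _
  -- Σ ≤ (64/3) L Δ + 3 T E
  have hsum2 : ∑ t ∈ Finset.Icc 1 T, (deriv F (c t)) ^ 2 ≤
      (64/3) * L * (F (c 1) - F (c (T + 1))) + 3 * T * E := by
    rcases le_or_gt 0 (F (c 1) - F (c (T + 1))) with h | h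
    · -- 2/η ≤ 16 L
      have h2η : (2 / η) * (F (c 1) - F (c (T + 1))) ≤ 16 * L * (F (c 1) - F (c (T + 1))) := by
        apply mul_le_mul_of_nonneg_right _ h
        rw [div_le_iff₀ hη0]
        nlinarith
      have hTE : (T:ℝ) * E ≤ 3 * T * E := by nlinarith [mul_nonneg hT0.le hE0]
      nlinarith [mul_nonneg hL.le h]
    · -- 2/η ≥ 8 L, Δ < 0
      have h2η : (2 / η) * (F (c 1) - F (c (T + 1))) ≤ 8 * L * (F (c 1) - F (c (T + 1))) := by
        have hge : 8 * L ≤ 2 / η := by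
          rw [le_div_iff₀ hη0]
          nlinarith
        exact mul_le_mul_of_nonpos_right hge h.le
      -- 8 L Δ ≤ (64/3) L Δ + 2 T E  using Δ ≥ -T(η/2)E and Lη ≤ 1/4
      have h8 : 8 * L * (F (c 1) - F (c (T + 1))) ≤
          (64/3) * L * (F (c 1) - F (c (T + 1))) + 2 * T * E := by
        have hm := mul_le_mul_of_nonneg_left hΔ (by positivity : (0:ℝ) ≤ (40/3) * L)
        have hTEnn : 0 ≤ (T:ℝ) * E := mul_nonneg hT0.le hE0
        have hmm : (20/3) * (L * η) * ((T:ℝ) * E) ≤ (20/3) * (1/4) * ((T:ℝ) * E) :=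
          mul_le_mul_of_nonneg_right (by linarith) hTEnn
        have hrw : (40/3) * L * (-(T:ℝ) * (η / 2) * E) = -((20/3) * (L * η) * ((T:ℝ) * E)) := by
          ring
        have hb : -(2 * (T:ℝ) * E) ≤ (40/3) * L * (-(T:ℝ) * (η / 2) * E) := by
          rw [hrw]
          have : (20/3) * (1/4) * ((T:ℝ) * E) ≤ 2 * (T:ℝ) * E := by linarith
          linarith
        linarith
      have hTE : (T:ℝ) * E ≤ 3 * T * E := by nlinarith [mul_nonneg hT0.le hE0]
      linarith
  -- divide by T
  have heq : ((64/3) * L * (F (c 1) - F (c (T + 1))) + 3 * (T:ℝ) * E) / T =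
      (64/3) * L * (F (c 1) - F (c (T + 1))) / T + 3 * E := by
    field_simp
  rw [← heq, one_div, inv_mul_le_iff₀ hT0, mul_comm, div_mul_cancel₀ _ (ne_of_gt hT0)]
  exact hsum2
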